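/- Fix a field 𝔽 and δ ≥ 0. Let (a_i, b_i]_{i∈I} and (c_j, d_j]_{j∈J} be barcode data and let (V, π^V) and (W, π^W) be the associated interval-decomposed persistence modules. Suppose V and W are δ-interleaved: there exist linear maps Φ_s : V_s → W_{s+δ} and Ψ_s : W_s → V_{s+δ} for all s ∈ ℝ, commuting with the structure maps (Φ_t ∘ π^V_{s,t} = π^W_{s+δ,t+δ} ∘ Φ_s and Ψ_t ∘ π^W_{s,t} = π^V_{s+δ,t+δ} ∘ Ψ_s for s ≤ t), and satisfying Ψ_{s+δ} ∘ Φ_s = π^V_{s,s+2δ} and Φ_{s+δ} ∘ Ψ_s = π^W_{s,s+2δ} for all s. Then for every ε > 0 and s ∈ ℝ there is an injection from {j ∈ J : c_j < s − δ and d_j − c_j > ε + 2δ} into {i ∈ I : a_i < s and b_i − a_i > ε}; in particular, if the latter set is finite then so is the former and #{j : c_j < s − δ, d_j − c_j > ε + 2δ} ≤ #{i : a_i < s, b_i − a_i > ε}. -/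
import Mathlib


/-- The index set of bars `(a i, b i]` "alive" at parameter `s`:
`B_s = {i | a i < s ≤ b i}`. -/
def barIdx {B : Type*} (a : B → ℝ) (b : B → EReal) (s : ℝ) : Set B :=
  {i | a i < s ∧ (s : EReal) ≤ b i}

open scoped Classical

/-- The structure map `π_{s,t} : ⨁_{i ∈ B_s} 𝔽 → ⨁_{i ∈ B_t} 𝔽` of the
interval-decomposed persistence module: the identity on the coordinates indexed by
`B_s ∩ B_t` and zero on the remaining coordinates. -/
noncomputable def structMap {B : Type*} (F : Type*) [Field F]
    (a : B → ℝ) (b : B → EReal) (s t : ℝ) :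
    (↥(barIdx a b s) →₀ F) →ₗ[F] (↥(barIdx a b t) →₀ F) :=
  Finsupp.lsum F fun i =>
    if h : (i : B) ∈ barIdx a b t then Finsupp.lsingle ⟨(i : B), h⟩ else 0

namespace Stmt17

variable {B : Type*} (F : Type*) [Field F]

noncomputable def transferMap (S S' : Set B) : (↥S →₀ F) →ₗ[F] (↥S' →₀ F) :=
  Finsupp.lsum F fun i =>
    if h : (i : B) ∈ S' then Finsupp.lsingle ⟨(i : B), h⟩ else 0

lemma transferMap_single {S S' : Set B} (i : ↥S) (x : F) :
    transferMap F S S' (Finsupp.single i x)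
      = if h : (i : B) ∈ S' then Finsupp.single ⟨(i : B), h⟩ x else 0 := by
  rw [transferMap, Finsupp.lsum_single]
  split_ifs with h
  · rfl
  · rfl

lemma transferMap_comp {S S' S'' : Set B} (h : ∀ x : B, x ∈ S → x ∈ S'' → x ∈ S') :
    (transferMap F S' S'').comp (transferMap F S S') = transferMap F S S'' := by
  refine Finsupp.lhom_ext fun i x => ?_
  rw [LinearMap.comp_apply]
  by_cases h1 : (i : B) ∈ S'
  · rw [transferMap_single, dif_pos h1, transferMap_single, transferMap_single]
  · rw [transferMap_single, dif_neg h1, map_zero, transferMap_single,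
      dif_neg (fun h2 => h1 (h i i.2 h2))]

lemma structMap_single (a : B → ℝ) (b : B → EReal) (s t : ℝ) (i : ↥(barIdx a b s)) (x : F) :
    structMap F a b s t (Finsupp.single i x)
      = if h : (i : B) ∈ barIdx a b t then Finsupp.single ⟨(i : B), h⟩ x else 0 :=
  transferMap_single F i x

lemma structMap_comp (a : B → ℝ) (b : B → EReal) {s t r : ℝ} (hst : s ≤ t) (htr : t ≤ r) :
    (structMap F a b t r).comp (structMap F a b s t) = structMap F a b s r :=
  transferMap_comp F fun x hs hr =>
    ⟨lt_of_lt_of_le hs.1 hst, le_trans (EReal.coe_le_coe_iff.mpr htr) hr.2⟩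

universe uI uJ uF

variable {I : Type uI} {J : Type uJ}
variable (a : I → ℝ) (b : I → EReal) (c : J → ℝ) (d : J → EReal) (δ ε : ℝ)

def RW (x : ℝ) : Set J := {j | c j < x ∧ ((x + δ + ε + δ : ℝ) : EReal) ≤ d j}

def RV (x : ℝ) : Set I := {i | a i < x + δ ∧ ((x + δ + ε : ℝ) : EReal) ≤ b i}

lemma mem_RW {x : ℝ} {j : J} :
    j ∈ RW c d δ ε x ↔ c j < x ∧ ((x + δ + ε + δ : ℝ) : EReal) ≤ d j := Iff.rfl

lemma mem_RV {x : ℝ} {i : I} :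
    i ∈ RV a b δ ε x ↔ a i < x + δ ∧ ((x + δ + ε : ℝ) : EReal) ≤ b i := Iff.rfl

section Maps

variable (F : Type uF) [Field F]
variable (Φ : ∀ s : ℝ, (↥(barIdx a b s) →₀ F) →ₗ[F] (↥(barIdx c d (s + δ)) →₀ F))
variable (Ψ : ∀ s : ℝ, (↥(barIdx c d s) →₀ F) →ₗ[F] (↥(barIdx a b (s + δ)) →₀ F))

noncomputable def Amap (x y : ℝ) :
    (↥(barIdx a b (x + δ + ε)) →₀ F) →ₗ[F] (↥(barIdx c d (y + δ + ε + δ)) →₀ F) :=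
  (structMap F c d (x + δ + ε + δ) (y + δ + ε + δ)).comp (Φ (x + δ + ε))

lemma Amap_comp
    (hΦ : ∀ s t : ℝ, s ≤ t → (Φ t).comp (structMap F a b s t)
      = (structMap F c d (s + δ) (t + δ)).comp (Φ s))
    {x x' y : ℝ} (h1 : x' ≤ x) (h2 : x ≤ y) :
    (Amap a b c d δ ε F Φ x y).comp (structMap F a b (x' + δ + ε) (x + δ + ε))
      = Amap a b c d δ ε F Φ x' y := by
  rw [Amap, Amap, LinearMap.comp_assoc, hΦ (x' + δ + ε) (x + δ + ε) (by linarith),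
    ← LinearMap.comp_assoc,
    structMap_comp F c d (show x' + δ + ε + δ ≤ x + δ + ε + δ by linarith)
      (show x + δ + ε + δ ≤ y + δ + ε + δ by linarith)]

lemma Amap_psi
    (hΦ : ∀ s t : ℝ, s ≤ t → (Φ t).comp (structMap F a b s t)
      = (structMap F c d (s + δ) (t + δ)).comp (Φ s))
    (hΦΨ : ∀ s : ℝ, (Φ (s + δ)).comp (Ψ s) = structMap F c d s (s + δ + δ))
    (hδ : 0 ≤ δ) (hε : 0 ≤ ε) {x y : ℝ} (hxy : x ≤ y) :
    (Amap a b c d δ ε F Φ x y).comp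
        ((structMap F a b (x + δ) (x + δ + ε)).comp (Ψ x))
      = structMap F c d x (y + δ + ε + δ) := by
  rw [Amap, LinearMap.comp_assoc, ← LinearMap.comp_assoc (Ψ x),
    hΦ (x + δ) (x + δ + ε) (by linarith), LinearMap.comp_assoc, hΦΨ x,
    ← LinearMap.comp_assoc,
    structMap_comp F c d (show x + δ + δ ≤ x + δ + ε + δ by linarith)
      (show x + δ + ε + δ ≤ y + δ + ε + δ by linarith),
    structMap_comp F c d (show x ≤ x + δ + δ by linarith)
      (show x + δ + δ ≤ y + δ + ε + δ by linarith)]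

variable {l : ℕ} (u : Fin l → ℝ)

noncomputable def AbarMap (hδ : 0 ≤ δ) (hε : 0 ≤ ε) (q : Fin l) :
    (↥(⋃ p, RV a b δ ε (u p)) →₀ F) →ₗ[F] (↥(barIdx c d (u q + δ + ε + δ)) →₀ F) :=
  Finsupp.lsum F fun i =>
    if h : ((Finset.univ.filter fun p => (i : I) ∈ RV a b δ ε (u p)).filter (· ≤ q)).Nonempty
    then
      LinearMap.toSpanSingleton F _
        ((Amap a b c d δ ε F Φ (u (Finset.max' _ h)) (u q))
          (Finsupp.single ⟨(i : I), by
            have hm := Finset.max'_mem _ h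
            simp only [Finset.mem_filter, Finset.mem_univ, true_and] at hm
            obtain ⟨⟨ha1, hb1⟩, -⟩ := hm
            exact ⟨lt_of_lt_of_le ha1 (by linarith), hb1⟩⟩ 1))
    else 0

lemma AbarMap_single_of_mem
    (hΦ : ∀ s t : ℝ, s ≤ t → (Φ t).comp (structMap F a b s t)
      = (structMap F c d (s + δ) (t + δ)).comp (Φ s))
    (hδ : 0 ≤ δ) (hε : 0 ≤ ε) (hu : Monotone u)
    {q p₀ : Fin l} (hpq : p₀ ≤ q)
    {i : ↥(⋃ p, RV a b δ ε (u p))} (hip : (i : I) ∈ RV a b δ ε (u p₀))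
    (hmem : (i : I) ∈ barIdx a b (u p₀ + δ + ε)) (x : F) :
    AbarMap a b c d δ ε F Φ u hδ hε q (Finsupp.single i x)
      = Amap a b c d δ ε F Φ (u p₀) (u q) (Finsupp.single ⟨(i : I), hmem⟩ x) := by
  have hne : ((Finset.univ.filter fun p => (i : I) ∈ RV a b δ ε (u p)).filter (· ≤ q)).Nonempty :=
    ⟨p₀, by simp only [Finset.mem_filter, Finset.mem_univ, true_and]; exact ⟨hip, hpq⟩⟩
  have hmm := Finset.max'_mem _ hne
  simp only [Finset.mem_filter, Finset.mem_univ, true_and] at hmm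
  obtain ⟨hmRV, hmq⟩ := hmm
  have hp₀m : p₀ ≤ Finset.max' _ hne := Finset.le_max' _ _
    (by simp only [Finset.mem_filter, Finset.mem_univ, true_and]; exact ⟨hip, hpq⟩)
  obtain ⟨hia, hib⟩ := hmRV
  have hmem' : (i : I) ∈ barIdx a b
      (u ((((Finset.univ.filter fun p => (i : I) ∈ RV a b δ ε (u p)).filter (· ≤ q)).max'
        hne)) + δ + ε) := ⟨lt_of_lt_of_le hia (by linarith), hib⟩
  rw [AbarMap, Finsupp.lsum_single, dif_pos hne, LinearMap.toSpanSingleton_apply]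
  have hcomp := Amap_comp a b c d δ ε F Φ hΦ (hu hp₀m) (hu hmq)
  have happ := congrArg
    (fun f => f (Finsupp.single (⟨(i : I), hmem⟩ : ↥(barIdx a b (u p₀ + δ + ε))) x)) hcomp
  simp only [LinearMap.comp_apply] at happ
  rw [structMap_single, dif_pos hmem'] at happ
  rw [← happ, ← map_smul, Finsupp.smul_single, smul_eq_mul, mul_one]

end Maps

end Stmt17

namespace Stmt17
section Maps2
variable {I : Type uI} {J : Type uJ}
variable (a : I → ℝ) (b : I → EReal) (c : J → ℝ) (d : J → EReal) (δ ε : ℝ)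
variable (F : Type uF) [Field F]
variable (Φ : ∀ s : ℝ, (↥(barIdx a b s) →₀ F) →ₗ[F] (↥(barIdx c d (s + δ)) →₀ F))
variable (Ψ : ∀ s : ℝ, (↥(barIdx c d s) →₀ F) →ₗ[F] (↥(barIdx a b (s + δ)) →₀ F))
variable {l : ℕ} (u : Fin l → ℝ)

lemma Abar_g
    (hΦ : ∀ s t : ℝ, s ≤ t → (Φ t).comp (structMap F a b s t)
      = (structMap F c d (s + δ) (t + δ)).comp (Φ s))
    (hΦΨ : ∀ s : ℝ, (Φ (s + δ)).comp (Ψ s) = structMap F c d s (s + δ + δ))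
    (hδ : 0 ≤ δ) (hε : 0 ≤ ε) (hu : Monotone u)
    {q p₀ : Fin l} (hpq : p₀ ≤ q) {j : J} (hj : j ∈ barIdx c d (u p₀)) :
    AbarMap a b c d δ ε F Φ u hδ hε q
        (transferMap F (barIdx a b (u p₀ + δ + ε)) (⋃ p, RV a b δ ε (u p))
          ((structMap F a b (u p₀ + δ) (u p₀ + δ + ε)) ((Ψ (u p₀)) (Finsupp.single ⟨j, hj⟩ 1))))
      = structMap F c d (u p₀) (u q + δ + ε + δ) (Finsupp.single ⟨j, hj⟩ 1) := by
  have hop : (AbarMap a b c d δ ε F Φ u hδ hε q).comp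
      ((transferMap F (barIdx a b (u p₀ + δ + ε)) (⋃ p, RV a b δ ε (u p))).comp
        (structMap F a b (u p₀ + δ) (u p₀ + δ + ε)))
      = (Amap a b c d δ ε F Φ (u p₀) (u q)).comp
          (structMap F a b (u p₀ + δ) (u p₀ + δ + ε)) := by
    refine Finsupp.lhom_ext fun i₀ x => ?_
    simp only [LinearMap.comp_apply]
    by_cases h1 : (i₀ : I) ∈ barIdx a b (u p₀ + δ + ε)
    · rw [structMap_single, dif_pos h1]
      have hT : (i₀ : I) ∈ ⋃ p, RV a b δ ε (u p) :=
        Set.mem_iUnion.mpr ⟨p₀, ⟨i₀.2.1, h1.2⟩⟩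
      rw [transferMap_single, dif_pos hT]
      exact AbarMap_single_of_mem a b c d δ ε F Φ u hΦ hδ hε hu hpq ⟨i₀.2.1, h1.2⟩ h1 x
    · rw [structMap_single, dif_neg h1, map_zero, map_zero, map_zero]
  have h1 := congrArg (fun f => f ((Ψ (u p₀)) (Finsupp.single ⟨j, hj⟩ 1))) hop
  simp only [LinearMap.comp_apply] at h1
  rw [h1]
  have h2 := congrArg (fun f => f (Finsupp.single (⟨j, hj⟩ : ↥(barIdx c d (u p₀))) 1))
    (Amap_psi a b c d δ ε F Φ Ψ hΦ hΦΨ hδ hε (hu hpq))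
  simpa only [LinearMap.comp_apply] using h2

end Maps2
end Stmt17

namespace Stmt17
section Main
universe uI' uJ' uF'
variable {I : Type uI'} {J : Type uJ'}
variable (a : I → ℝ) (b : I → EReal) (c : J → ℝ) (d : J → EReal) (δ ε : ℝ)
variable (F : Type uF') [Field F]
variable (Φ : ∀ s : ℝ, (↥(barIdx a b s) →₀ F) →ₗ[F] (↥(barIdx c d (s + δ)) →₀ F))
variable (Ψ : ∀ s : ℝ, (↥(barIdx c d s) →₀ F) →ₗ[F] (↥(barIdx a b (s + δ)) →₀ F))

theorem mainLemma
    (hΦ : ∀ s t : ℝ, s ≤ t → (Φ t).comp (structMap F a b s t)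
      = (structMap F c d (s + δ) (t + δ)).comp (Φ s))
    (hΦΨ : ∀ s : ℝ, (Φ (s + δ)).comp (Ψ s) = structMap F c d s (s + δ + δ))
    (hδ : 0 ≤ δ) (hε : 0 ≤ ε) (s : ℝ)
    {l : ℕ} (u : Fin l → ℝ) (hu : Monotone u) (hus : ∀ p, u p ≤ s - δ) :
    Nonempty (↥(⋃ p, RW c d δ ε (u p)) ↪
      ↥{i : I | a i < s ∧ (ε : EReal) < b i - (a i : EReal)}) := by
  classical
  have hex : ∀ j : ↥(⋃ p, RW c d δ ε (u p)),
      (Finset.univ.filter fun p => (j : J) ∈ RW c d δ ε (u p)).Nonempty := by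
    intro j
    obtain ⟨p, hp⟩ := Set.mem_iUnion.mp j.2
    exact ⟨p, by simp only [Finset.mem_filter, Finset.mem_univ, true_and]; exact hp⟩
  set P : ↥(⋃ p, RW c d δ ε (u p)) → Fin l := fun j => Finset.max' _ (hex j) with hPdef
  have hPmem : ∀ j, (j : J) ∈ RW c d δ ε (u (P j)) := by
    intro j
    have := Finset.max'_mem _ (hex j)
    simpa only [Finset.mem_filter, Finset.mem_univ, true_and] using this
  have hjal : ∀ j, (j : J) ∈ barIdx c d (u (P j)) := by
    intro j
    refine ⟨(hPmem j).1, le_trans ?_ (hPmem j).2⟩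
    exact EReal.coe_le_coe_iff.mpr (by linarith)
  have hli : LinearIndependent F (fun j : ↥(⋃ p, RW c d δ ε (u p)) =>
      transferMap F (barIdx a b (u (P j) + δ + ε)) (⋃ p, RV a b δ ε (u p))
        ((structMap F a b (u (P j) + δ) (u (P j) + δ + ε))
          ((Ψ (u (P j))) (Finsupp.single ⟨(j : J), hjal j⟩ 1)))) := by
    rw [linearIndependent_iff]
    intro cf hcf
    by_contra hne
    have hsup : cf.support.Nonempty := Finsupp.support_nonempty_iff.mpr hne
    obtain ⟨j₀, hj₀, hj₀max⟩ := Finset.exists_max_image cf.support P hsup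
    have happ := congrArg (AbarMap a b c d δ ε F Φ u hδ hε (P j₀)) hcf
    rw [map_zero, Finsupp.linearCombination_apply, Finsupp.sum, map_sum] at happ
    have hterm : ∀ j ∈ cf.support,
        (AbarMap a b c d δ ε F Φ u hδ hε (P j₀))
            (cf j • transferMap F (barIdx a b (u (P j) + δ + ε)) (⋃ p, RV a b δ ε (u p))
              ((structMap F a b (u (P j) + δ) (u (P j) + δ + ε))
                ((Ψ (u (P j))) (Finsupp.single ⟨(j : J), hjal j⟩ 1))))
          = cf j • structMap F c d (u (P j)) (u (P j₀) + δ + ε + δ)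
              (Finsupp.single ⟨(j : J), hjal j⟩ 1) := by
      intro j hj
      rw [map_smul]
      congr 1
      exact Abar_g a b c d δ ε F Φ Ψ u hΦ hΦΨ hδ hε hu (hj₀max j hj) (hjal j)
    rw [Finset.sum_congr rfl hterm] at happ
    have hk : (j₀ : J) ∈ barIdx c d (u (P j₀) + δ + ε + δ) := by
      refine ⟨lt_of_lt_of_le (hPmem j₀).1 (by linarith), (hPmem j₀).2⟩
    have heval := congrArg (⇑(Finsupp.lapply (⟨(j₀ : J), hk⟩ : ↥(barIdx c d (u (P j₀) + δ + ε + δ)))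
      : (↥(barIdx c d (u (P j₀) + δ + ε + δ)) →₀ F) →ₗ[F] F)) happ
    rw [map_sum, map_zero] at heval
    rw [Finset.sum_eq_single_of_mem j₀ hj₀ ?side] at heval
    case side =>
      intro j hj hjne
      rw [Finsupp.lapply_apply, Finsupp.smul_apply, structMap_single]
      by_cases hh : (j : J) ∈ barIdx c d (u (P j₀) + δ + ε + δ)
      · rw [dif_pos hh, Finsupp.single_apply, if_neg, smul_zero]
        intro hcon
        apply hjne
        have h5 : ((j : ↥(⋃ p, RW c d δ ε (u p))) : J) = ((j₀ : ↥(⋃ p, RW c d δ ε (u p))) : J) :=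
          congrArg (fun z : ↥(barIdx c d (u (P j₀) + δ + ε + δ)) => (z : J)) hcon
        exact Subtype.coe_injective h5
      · rw [dif_neg hh, Finsupp.zero_apply, smul_zero]
    rw [Finsupp.lapply_apply, Finsupp.smul_apply, structMap_single, dif_pos hk,
      Finsupp.single_apply, if_pos rfl, smul_eq_mul, mul_one] at heval
    exact (Finsupp.mem_support_iff.mp hj₀) heval
  have hTI : (⋃ p, RV a b δ ε (u p)) ⊆ {i : I | a i < s ∧ (ε : EReal) < b i - (a i : EReal)} := by
    intro i hi
    obtain ⟨p, hp⟩ := Set.mem_iUnion.mp hi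
    obtain ⟨h1, h2⟩ := hp
    refine ⟨by have := hus p; linarith, ?_⟩
    refine (EReal.lt_sub_iff_add_lt (Or.inl (EReal.coe_ne_bot _))
      (Or.inl (EReal.coe_ne_top _))).mpr ?_
    calc ((ε : ℝ) : EReal) + ((a i : ℝ) : EReal) = ((ε + a i : ℝ) : EReal) := by
          rw [EReal.coe_add]
    _ < ((u p + δ + ε : ℝ) : EReal) := EReal.coe_lt_coe_iff.mpr (by linarith)
    _ ≤ b i := h2
  have c1 := hli.cardinal_lift_le_rank
  rw [rank_finsupp_self] at c1
  have c2 : Cardinal.lift.{uJ'} (Cardinal.lift.{uF'} (Cardinal.mk ↥(⋃ p, RV a b δ ε (u p))))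
      ≤ Cardinal.lift.{uJ'} (Cardinal.lift.{uF'}
        (Cardinal.mk ↥{i : I | a i < s ∧ (ε : EReal) < b i - (a i : EReal)})) :=
    Cardinal.lift_le.mpr (Cardinal.lift_le.mpr (Cardinal.mk_le_mk_of_subset hTI))
  have c3 := le_trans c1 c2
  rw [Cardinal.lift_lift] at c3
  exact Cardinal.lift_mk_le.{uF'}.mp c3

end Main
end Stmt17

/-- Suppose the interval-decomposed persistence modules associated with
barcode data `(a i, b i]_{i ∈ I}` and `(c j, d j]_{j ∈ J}` are `δ`-interleaved via maps
`Φ_s, Ψ_s` commuting with the structure maps and with `Ψ_{s+δ} ∘ Φ_s = π_{s,s+2δ}` and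
`Φ_{s+δ} ∘ Ψ_s = π_{s,s+2δ}`. Then for every `ε > 0` and `s` there is an injection from
`{j | c j < s − δ, d j − c j > ε + 2δ}` into `{i | a i < s, b i − a i > ε}`; in
particular, if the latter set is finite then so is the former and the cardinalities are
comparable. -/
theorem stmt_17 {I J : Type*} (F : Type*) [Field F] (δ : ℝ) (hδ : 0 ≤ δ)
    (a : I → ℝ) (b : I → EReal) (hab : ∀ i, (a i : EReal) < b i)
    (c : J → ℝ) (d : J → EReal) (hcd : ∀ j, (c j : EReal) < d j)
    (Φ : ∀ s : ℝ, (↥(barIdx a b s) →₀ F) →ₗ[F] (↥(barIdx c d (s + δ)) →₀ F))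
    (Ψ : ∀ s : ℝ, (↥(barIdx c d s) →₀ F) →ₗ[F] (↥(barIdx a b (s + δ)) →₀ F))
    (hΦ : ∀ s t : ℝ, s ≤ t →
      (Φ t).comp (structMap F a b s t)
        = (structMap F c d (s + δ) (t + δ)).comp (Φ s))
    (hΨ : ∀ s t : ℝ, s ≤ t →
      (Ψ t).comp (structMap F c d s t)
        = (structMap F a b (s + δ) (t + δ)).comp (Ψ s))
    (hΨΦ : ∀ s : ℝ, (Ψ (s + δ)).comp (Φ s) = structMap F a b s (s + δ + δ))
    (hΦΨ : ∀ s : ℝ, (Φ (s + δ)).comp (Ψ s) = structMap F c d s (s + δ + δ)) :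
    ∀ ε > (0 : ℝ), ∀ s : ℝ,
      (∃ ι : ↥{j : J | c j < s - δ ∧
                ((ε + 2 * δ : ℝ) : EReal) < d j - (c j : EReal)} →
            ↥{i : I | a i < s ∧ (ε : EReal) < b i - (a i : EReal)},
        Function.Injective ι) ∧
      ({i : I | a i < s ∧ (ε : EReal) < b i - (a i : EReal)}.Finite →
        {j : J | c j < s - δ ∧
          ((ε + 2 * δ : ℝ) : EReal) < d j - (c j : EReal)}.Finite ∧
        Nat.card ↥{j : J | c j < s - δ ∧
            ((ε + 2 * δ : ℝ) : EReal) < d j - (c j : EReal)}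
          ≤ Nat.card ↥{i : I | a i < s ∧ (ε : EReal) < b i - (a i : EReal)}) := by

  classical
  intro ε hε s
  have hrat : ∀ j : J,
      j ∈ {j : J | c j < s - δ ∧ ((ε + 2 * δ : ℝ) : EReal) < d j - (c j : EReal)} →
      ∃ q : ℚ, (q : ℝ) ≤ s - δ ∧ j ∈ Stmt17.RW c d δ ε (q : ℝ) := by
    intro j hj
    obtain ⟨h1, h2⟩ := hj
    by_cases htop : d j = ⊤
    · obtain ⟨q, hq1, hq2⟩ := exists_rat_btwn h1
      exact ⟨q, le_of_lt hq2, hq1, by rw [htop]; exact le_top⟩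
    · have hbot : d j ≠ ⊥ := by
        intro hb
        rw [hb, EReal.bot_sub] at h2
        exact (not_lt_bot h2)
      have hr : (((d j).toReal : ℝ) : EReal) = d j := EReal.coe_toReal htop hbot
      rw [← hr, ← EReal.coe_sub] at h2
      have h2' : ε + 2 * δ < (d j).toReal - c j := EReal.coe_lt_coe_iff.mp h2
      obtain ⟨q, hq1, hq2⟩ := exists_rat_btwn
        (show c j < min (s - δ) ((d j).toReal - (ε + 2 * δ)) from lt_min h1 (by linarith))
      refine ⟨q, le_trans hq2.le (min_le_left _ _), hq1, ?_⟩
      rw [← hr]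
      refine EReal.coe_le_coe_iff.mpr ?_
      have := lt_of_lt_of_le hq2 (min_le_right _ _)
      linarith
  have cover : ∀ t : Set J, t.Finite →
      t ⊆ {j : J | c j < s - δ ∧ ((ε + 2 * δ : ℝ) : EReal) < d j - (c j : EReal)} →
      Nonempty (↥t ↪ ↥{i : I | a i < s ∧ (ε : EReal) < b i - (a i : EReal)}) := by
    intro t htf hts
    have hq : ∀ j : ↥t, ∃ q : ℚ, (q : ℝ) ≤ s - δ ∧ (j : J) ∈ Stmt17.RW c d δ ε (q : ℝ) :=
      fun j => hrat j (hts j.2)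
    choose qf hqf1 hqf2 using hq
    haveI := htf.to_subtype
    haveI : Fintype ↥t := Fintype.ofFinite _
    obtain ⟨emb⟩ := Stmt17.mainLemma a b c d δ ε F Φ Ψ hΦ hΦΨ hδ hε.le s
      (fun p => (((Finset.univ.image qf).orderIsoOfFin rfl p : ℚ) : ℝ))
      (fun p p' hpp => Rat.cast_le.mpr
        (Subtype.coe_le_coe.mpr (((Finset.univ.image qf).orderIsoOfFin rfl).monotone hpp)))
      (by
        intro p
        have hmem := ((Finset.univ.image qf).orderIsoOfFin rfl p).2
        obtain ⟨j, -, hjq⟩ := Finset.mem_image.mp hmem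
        show (((((Finset.univ.image qf).orderIsoOfFin rfl) p : ℚ)) : ℝ) ≤ s - δ
        rw [← hjq]
        exact hqf1 j)
    have hsub : ∀ j : ↥t, (j : J) ∈ ⋃ p, Stmt17.RW c d δ ε
        (((Finset.univ.image qf).orderIsoOfFin rfl p : ℚ) : ℝ) := by
      intro j
      obtain ⟨p, hp⟩ := ((Finset.univ.image qf).orderIsoOfFin rfl).surjective
        ⟨qf j, Finset.mem_image_of_mem qf (Finset.mem_univ j)⟩
      refine Set.mem_iUnion.mpr ⟨p, ?_⟩
      have hup : (((Finset.univ.image qf).orderIsoOfFin rfl p : ℚ) : ℝ) = ((qf j : ℚ) : ℝ) := by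
        rw [hp]
      rw [hup]
      exact hqf2 j
    exact ⟨⟨fun j => emb ⟨(j : J), hsub j⟩, fun j j' hjj => by
      have h6 := emb.injective hjj
      simp only [Subtype.mk.injEq] at h6
      exact Subtype.coe_injective h6⟩⟩
  by_cases hI : {i : I | a i < s ∧ (ε : EReal) < b i - (a i : EReal)}.Finite
  · haveI := hI.to_subtype
    have hJfin : {j : J | c j < s - δ ∧ ((ε + 2 * δ : ℝ) : EReal) < d j - (c j : EReal)}.Finite := by
      by_contra hJinf
      obtain ⟨t, hts, htf, htc⟩ := Set.Infinite.exists_subset_ncard_eq hJinf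
        (Nat.card ↥{i : I | a i < s ∧ (ε : EReal) < b i - (a i : EReal)} + 1)
      obtain ⟨embt⟩ := cover t htf hts
      have hle : t.ncard ≤ Nat.card ↥{i : I | a i < s ∧ (ε : EReal) < b i - (a i : EReal)} := by
        rw [← Nat.card_coe_set_eq]
        exact Nat.card_le_card_of_injective embt embt.injective
      omega
    obtain ⟨embJ⟩ := cover _ hJfin Set.Subset.rfl
    exact ⟨⟨embJ, embJ.injective⟩, fun _ =>
      ⟨hJfin, Nat.card_le_card_of_injective embJ embJ.injective⟩⟩
  · haveI hIinf : Infinite ↥{i : I | a i < s ∧ (ε : EReal) < b i - (a i : EReal)} :=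
      Set.infinite_coe_iff.mpr hI
    have hq : ∀ q : ℚ, Nonempty
        (↥{j : J | j ∈ Stmt17.RW c d δ ε (q : ℝ) ∧ (q : ℝ) ≤ s - δ} ↪
          ↥{i : I | a i < s ∧ (ε : EReal) < b i - (a i : EReal)}) := by
      intro q
      by_cases hqle : (q : ℝ) ≤ s - δ
      · obtain ⟨emb⟩ := Stmt17.mainLemma a b c d δ ε F Φ Ψ hΦ hΦΨ hδ hε.le s
          (fun _ : Fin 1 => (q : ℝ)) monotone_const (fun _ => hqle)
        refine ⟨⟨fun j => emb ⟨(j : J), Set.mem_iUnion.mpr ⟨0, j.2.1⟩⟩, ?_⟩⟩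
        intro j j' hjj
        have h6 := emb.injective hjj
        simp only [Subtype.mk.injEq] at h6
        exact Subtype.coe_injective h6
      · exact ⟨⟨fun j => absurd j.2.2 hqle, fun j => absurd j.2.2 hqle⟩⟩
    have E := fun q => (hq q).some
    have hsel : ∀ j : ↥{j : J | c j < s - δ ∧ ((ε + 2 * δ : ℝ) : EReal) < d j - (c j : EReal)},
        ∃ q : ℚ, (q : ℝ) ≤ s - δ ∧ (j : J) ∈ Stmt17.RW c d δ ε (q : ℝ) :=
      fun j => hrat j j.2
    choose qf hqf1 hqf2 using hsel
    set Efun : ℚ → ↥{j : J | c j < s - δ ∧ ((ε + 2 * δ : ℝ) : EReal) < d j - (c j : EReal)} →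
        Option ↥{i : I | a i < s ∧ (ε : EReal) < b i - (a i : EReal)} := fun q j =>
      if h : (j : J) ∈ Stmt17.RW c d δ ε (q : ℝ) ∧ (q : ℝ) ≤ s - δ then some (E q ⟨(j : J), h⟩)
      else none with hEfun
    have hinj : Function.Injective (fun j : ↥{j : J | c j < s - δ ∧
        ((ε + 2 * δ : ℝ) : EReal) < d j - (c j : EReal)} => (qf j, Efun (qf j) j)) := by
      intro j j' hjj
      have h1 : qf j = qf j' := congrArg Prod.fst hjj
      have h2 : Efun (qf j) j = Efun (qf j') j' := congrArg Prod.snd hjj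
      rw [h1] at h2
      rw [hEfun] at h2
      simp only at h2
      rw [dif_pos ⟨(by rw [← h1]; exact hqf2 j), (by rw [← h1]; exact hqf1 j)⟩,
        dif_pos ⟨hqf2 j', hqf1 j'⟩] at h2
      have h3 := (E (qf j')).injective (Option.some_injective _ h2)
      simp only [Subtype.mk.injEq] at h3
      exact Subtype.coe_injective h3
    have hemb1 : Nonempty (↥{j : J | c j < s - δ ∧ ((ε + 2 * δ : ℝ) : EReal) < d j - (c j : EReal)}
        ↪ ℚ × Option ↥{i : I | a i < s ∧ (ε : EReal) < b i - (a i : EReal)}) := ⟨⟨_, hinj⟩⟩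
    have hcard : Cardinal.mk (ℚ × Option ↥{i : I | a i < s ∧ (ε : EReal) < b i - (a i : EReal)})
        = Cardinal.mk ↥{i : I | a i < s ∧ (ε : EReal) < b i - (a i : EReal)} := by
      rw [Cardinal.mk_prod, Cardinal.mk_denumerable, Cardinal.mk_option, Cardinal.lift_aleph0,
        Cardinal.lift_uzero, Cardinal.add_one_eq (Cardinal.infinite_iff.mp hIinf),
        Cardinal.mul_eq_max le_rfl (Cardinal.infinite_iff.mp hIinf),
        max_eq_right (Cardinal.infinite_iff.mp hIinf)]
    have hle2 := Cardinal.lift_mk_le'.mpr hemb1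
    rw [hcard] at hle2
    obtain ⟨embJ⟩ := Cardinal.lift_mk_le'.mp hle2
    exact ⟨⟨embJ, embJ.injective⟩, fun hfin => absurd hfin hI⟩
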